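/- arXiv:1312.3416 — 5 statements merged into one kernel-verified Lean document; each statement's English description precedes it below -/
import Mathlib

section
/- If global states C and C'' are permutations of each other, then for every global state C', the product transition probabilities agree: Π_{n=1}^N K(m)_{C[n], C'[n]} summed over all C' with a fixed occupancy measure m' equals the same sum with C replaced by C''. Consequently the occupancy-measure process transition probability Pr{M(t+1)=m' | M(t)=m} = Σ_{C': M(C')=m'} P_{C,C'} is well-defined, i.e., independent of the representative C with M(C) = m. -/
open scoped Classical
open Finset

/-- if `C` and `C''` are permutations of each other, the sum of
product transition probabilities towards any fixed occupancy measure `m'`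
agrees, so the occupancy-measure process transition probability is
well-defined. -/
theorem stmt_4 {S : Type*} [Fintype S] (N : ℕ) (hN : 0 < N)
    (K : (S → ℝ) → S → S → ℝ)
    (M : (Fin N → S) → (S → ℝ))
    (hM : ∀ C c, M C c = (1 / (N : ℝ)) * ∑ n : Fin N, if C n = c then 1 else 0)
    (P : (Fin N → S) → (Fin N → S) → ℝ)
    (hP : ∀ C C', P C C' = ∏ n : Fin N, K (M C) (C n) (C' n))
    (C C'' : Fin N → S)
    (hperm : ∃ σ : Equiv.Perm (Fin N), ∀ n, C'' n = C (σ n)) :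
    ∀ m' : S → ℝ,
      ∑ C' ∈ Finset.univ.filter (fun C' : Fin N → S => M C' = m'), P C C' =
      ∑ C' ∈ Finset.univ.filter (fun C' : Fin N → S => M C' = m'), P C'' C' := by
  obtain ⟨σ, hσ⟩ := hperm
  have hMcomp : ∀ D : Fin N → S, M (fun n => D (σ n)) = M D := by
    intro D
    funext c
    rw [hM, hM]
    congr 1
    exact Equiv.sum_comp σ (fun n => if D n = c then (1:ℝ) else 0)
  have hMC : M C'' = M C := by
    have : C'' = fun n => C (σ n) := funext hσ
    rw [this, hMcomp]
  intro m'
  refine Finset.sum_nbij' (fun C' => fun n => C' (σ n))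
    (fun C' => fun n => C' (σ.symm n)) ?_ ?_ ?_ ?_ ?_
  · intro C' h
    simp only [Finset.mem_filter, Finset.mem_univ, true_and] at h ⊢
    rw [hMcomp, h]
  · intro C' h
    simp only [Finset.mem_filter, Finset.mem_univ, true_and] at h ⊢
    have := hMcomp (fun n => C' (σ.symm n))
    simp only [Equiv.symm_apply_apply] at this
    rw [← this]
    exact h
  · intro C' _; funext n; simp
  · intro C' _; funext n; simp
  · intro C' _
    rw [hP, hP, hMC]
    have : ∀ n, C'' n = C (σ n) := hσ
    calc ∏ n : Fin N, K (M C) (C n) (C' n)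
        = ∏ n : Fin N, K (M C) (C (σ n)) (C' (σ n)) :=
          (Equiv.prod_comp σ (fun n => K (M C) (C n) (C' n))).symm
      _ = ∏ n : Fin N, K (M C) (C'' n) (C' (σ n)) := by
          apply Finset.prod_congr rfl; intro n _; rw [hσ n]
end

section
/- Let H(C) = ⟨C[1], M(C)⟩. If M(C) = M(C'') and C[1] = C''[1], then for every pair ⟨c', m'⟩, Σ_{C' : H(C') = ⟨c',m'⟩} P_{C,C'} = Σ_{C' : H(C') = ⟨c',m'⟩} P_{C'',C'}. Hence the projected transition matrix H^(N)_{⟨c,m⟩,⟨c',m'⟩} = Σ_{C': H(C')=⟨c',m'⟩} P_{C,C'} (for any C with H(C)=⟨c,m⟩) is well-defined. -/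
open scoped Classical
open Finset

lemma exists_perm_of_fiber_card {α S : Type*} [Fintype α] (f g : α → S)
    (h : ∀ c, Fintype.card {a // g a = c} = Fintype.card {a // f a = c}) :
    ∃ σ : Equiv.Perm α, ∀ a, f (σ a) = g a := by
  classical
  let e : ∀ c, {a // g a = c} ≃ {a // f a = c} := fun c => Fintype.equivOfCardEq (h c)
  refine ⟨(Equiv.sigmaFiberEquiv g).symm.trans
      ((Equiv.sigmaCongrRight e).trans (Equiv.sigmaFiberEquiv f)), fun a => ?_⟩
  simp only [Equiv.trans_apply, Equiv.sigmaFiberEquiv, Equiv.sigmaCongrRight,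
    Equiv.coe_fn_symm_mk, Equiv.coe_fn_mk]
  exact (e (g a) ⟨a, rfl⟩).2

/-- the projected transition matrix
`H^(N)_{⟨c,m⟩,⟨c',m'⟩} = Σ_{C' : H(C')=⟨c',m'⟩} P_{C,C'}` is well-defined:
it does not depend on the representative `C` with `H(C) = ⟨c,m⟩`. -/
theorem stmt_5 {S : Type*} [Fintype S] (N : ℕ) (hN : 0 < N)
    (K : (S → ℝ) → S → S → ℝ)
    (M : (Fin N → S) → (S → ℝ))
    (hM : ∀ C c, M C c = (1 / (N : ℝ)) * ∑ n : Fin N, if C n = c then 1 else 0)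
    (P : (Fin N → S) → (Fin N → S) → ℝ)
    (hP : ∀ C C', P C C' = ∏ n : Fin N, K (M C) (C n) (C' n))
    (H : (Fin N → S) → S × (S → ℝ))
    (hH : ∀ C, H C = (C ⟨0, hN⟩, M C))
    (C C'' : Fin N → S)
    (hMeq : M C = M C'') (hfst : C ⟨0, hN⟩ = C'' ⟨0, hN⟩) :
    ∀ (c' : S) (m' : S → ℝ),
      ∑ C' ∈ Finset.univ.filter (fun C' : Fin N → S => H C' = (c', m')), P C C' =
      ∑ C' ∈ Finset.univ.filter (fun C' : Fin N → S => H C' = (c', m')), P C'' C' := by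
  intro c' m'
  set z : Fin N := ⟨0, hN⟩ with hz
  -- real-valued fiber counts agree
  have hsum : ∀ c, (∑ n : Fin N, if C n = c then (1:ℝ) else 0)
      = ∑ n : Fin N, if C'' n = c then (1:ℝ) else 0 := by
    intro c
    have h1 := congrFun hMeq c
    rw [hM, hM] at h1
    have hNne : (1 / (N : ℝ)) ≠ 0 := by
      apply one_div_ne_zero
      exact_mod_cast hN.ne'
    exact mul_left_cancel₀ hNne h1
  -- fiber counts on the complement of z agree
  have hsum' : ∀ c, (∑ n ∈ univ.erase z, if C n = c then (1:ℝ) else 0)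
      = ∑ n ∈ univ.erase z, if C'' n = c then (1:ℝ) else 0 := by
    intro c
    have h1 : (if C z = c then (1:ℝ) else 0) + ∑ n ∈ univ.erase z, (if C n = c then (1:ℝ) else 0)
        = ∑ n : Fin N, if C n = c then (1:ℝ) else 0 :=
      Finset.add_sum_erase univ (fun n => if C n = c then (1:ℝ) else 0) (mem_univ z)
    have h2 : (if C'' z = c then (1:ℝ) else 0) + ∑ n ∈ univ.erase z, (if C'' n = c then (1:ℝ) else 0)
        = ∑ n : Fin N, if C'' n = c then (1:ℝ) else 0 :=
      Finset.add_sum_erase univ (fun n => if C'' n = c then (1:ℝ) else 0) (mem_univ z)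
    have := h1.trans ((hsum c).trans h2.symm)
    rw [hfst] at this
    exact add_left_cancel this
  -- subtype fiber cardinalities agree
  have hcard : ∀ c : S,
      Fintype.card {a : {n : Fin N // n ≠ z} // C'' a.1 = c}
      = Fintype.card {a : {n : Fin N // n ≠ z} // C a.1 = c} := by
    intro c
    have key : ∀ D : Fin N → S,
        ((Fintype.card {a : {n : Fin N // n ≠ z} // D a.1 = c} : ℝ))
        = ∑ n ∈ univ.erase z, if D n = c then (1:ℝ) else 0 := by
      intro D
      rw [Finset.sum_subtype (p := fun n => n ≠ z) (univ.erase z) (fun x => by simp)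
        (fun n => if D n = c then (1:ℝ) else 0)]
      rw [Fintype.card_subtype, Finset.card_filter]
      push_cast
      rfl
    have := (key C'').trans ((hsum' c).symm.trans (key C).symm)
    exact_mod_cast this
  obtain ⟨τ, hτ⟩ := exists_perm_of_fiber_card
    (fun a : {n : Fin N // n ≠ z} => C a.1) (fun a => C'' a.1) hcard
  -- extend τ to a permutation of Fin N fixing z
  let σ : Equiv.Perm (Fin N) := τ.extendDomain (Equiv.refl {n : Fin N // n ≠ z})
  have hσz : σ z = z :=
    Equiv.Perm.extendDomain_apply_not_subtype _ _ (not_not_intro rfl)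
  have hσ : ∀ n, C (σ n) = C'' n := by
    intro n
    by_cases h : n = z
    · subst h; rw [hσz]; exact hfst
    · have : σ n = (τ ⟨n, h⟩).1 := by
        have := Equiv.Perm.extendDomain_apply_image τ (Equiv.refl {n : Fin N // n ≠ z}) ⟨n, h⟩
        simpa using this
      rw [this]; exact hτ ⟨n, h⟩
  have hσsymmz : σ.symm z = z := by
    rw [Equiv.symm_apply_eq]; exact hσz.symm
  -- M is invariant under precomposition with σ.symm
  have hMinv : ∀ C' : Fin N → S, M (fun n => C' (σ.symm n)) = M C' := by
    intro C'
    funext c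
    rw [hM, hM]
    congr 1
    exact Equiv.sum_comp σ.symm (fun n => if C' n = c then (1:ℝ) else 0)
  -- H is invariant under precomposition with σ.symm
  have hHinv : ∀ C' : Fin N → S, H (fun n => C' (σ.symm n)) = H C' := by
    intro C'
    rw [hH, hH, hMinv, hσsymmz]
  -- P C'' C' = P C (C' ∘ σ.symm)
  have hPrel : ∀ C' : Fin N → S, P C'' C' = P C (fun n => C' (σ.symm n)) := by
    intro C'
    rw [hP, hP, ← hMeq]
    have : ∀ n : Fin N, K (M C) (C'' n) (C' n)
        = K (M C) (C (σ n)) (C' (σ.symm (σ n))) := by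
      intro n; rw [hσ, Equiv.symm_apply_apply]
    rw [Finset.prod_congr rfl (fun n _ => this n)]
    exact Equiv.prod_comp σ (fun m => K (M C) (C m) (C' (σ.symm m)))
  -- reindex the sum by the equivalence C' ↦ C' ∘ σ.symm
  rw [Finset.sum_filter, Finset.sum_filter]
  have := Equiv.sum_comp (Equiv.arrowCongr σ (Equiv.refl S))
    (fun C' : Fin N → S => if H C' = (c', m') then P C C' else 0)
  rw [← this]
  apply Finset.sum_congr rfl
  intro C' _
  have harr : (Equiv.arrowCongr σ (Equiv.refl S)) C' = fun n => C' (σ.symm n) := rfl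
  rw [harr, hHinv, ← hPrel]
end

section
/- Marginalizing the projected matrix H^(N) over the occupancy component recovers the object matrix: for any C with H(C) = ⟨c,m⟩ and any local state c', Σ_{m'} H^(N)_{⟨c,m⟩,⟨c',m'⟩} = K(m)_{c,c'}. -/
open scoped Classical
open Finset

/-- marginalizing the projected matrix `H^(N)` over the occupancy
component recovers the object matrix `K`. -/
theorem stmt_7 {S : Type*} [Fintype S] (N : ℕ) (hN : 0 < N)
    (K : (S → ℝ) → S → S → ℝ)
    (hK : ∀ m, (∀ i j, 0 ≤ K m i j) ∧ ∀ i, ∑ j, K m i j = 1)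
    (M : (Fin N → S) → (S → ℝ))
    (hM : ∀ C c, M C c = (1 / (N : ℝ)) * ∑ n : Fin N, if C n = c then 1 else 0)
    (P : (Fin N → S) → (Fin N → S) → ℝ)
    (hP : ∀ C C', P C C' = ∏ n : Fin N, K (M C) (C n) (C' n))
    (H : (Fin N → S) → S × (S → ℝ))
    (hH : ∀ C, H C = (C ⟨0, hN⟩, M C))
    (Hmat : (S × (S → ℝ)) → (S × (S → ℝ)) → ℝ)
    (hHmat : ∀ (C : Fin N → S) (c' : S) (m' : S → ℝ),
      Hmat (H C) (c', m') =
        ∑ C' ∈ Finset.univ.filter (fun C' : Fin N → S => H C' = (c', m')), P C C') :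
    ∀ (C : Fin N → S) (c' : S),
      ∑ m' ∈ (Finset.univ.filter
          (fun C' : Fin N → S => C' ⟨0, hN⟩ = c')).image M,
        Hmat (H C) (c', m') = K (M C) (C ⟨0, hN⟩) c' := by
  intro C c'
  set i0 : Fin N := ⟨0, hN⟩ with hi0
  -- Step 1: unfold the image sum into a single sum over configurations with C' i0 = c'
  have hstep : ∑ m' ∈ (Finset.univ.filter
        (fun C' : Fin N → S => C' i0 = c')).image M, Hmat (H C) (c', m')
      = ∑ C' ∈ Finset.univ.filter (fun C' : Fin N → S => C' i0 = c'), P C C' := by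
    refine Finset.sum_image' (P C) ?_
    intro C0 hC0
    simp only [Finset.mem_filter, Finset.mem_univ, true_and] at hC0
    rw [hHmat]
    apply Finset.sum_congr
    · ext C'
      simp only [Finset.mem_filter, Finset.mem_univ, true_and, hH, Prod.mk.injEq]
    · intros; rfl
  rw [hstep]
  -- Step 2: compute the sum
  set f : Fin N → S → ℝ := fun n j =>
    if n = i0 then (if j = c' then K (M C) (C n) j else 0) else K (M C) (C n) j with hf
  have hA : ∑ C' ∈ Finset.univ.filter (fun C' : Fin N → S => C' i0 = c'), P C C'
      = ∑ C' : Fin N → S, ∏ n, f n (C' n) := by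
    rw [Finset.sum_filter]
    apply Finset.sum_congr rfl
    intro C' _
    by_cases h : C' i0 = c'
    · rw [if_pos h, hP]
      apply Finset.prod_congr rfl
      intro n _
      simp only [hf]
      by_cases hn : n = i0
      · subst hn; rw [if_pos rfl, if_pos h]
      · rw [if_neg hn]
    · rw [if_neg h]
      symm
      apply Finset.prod_eq_zero (Finset.mem_univ i0)
      simp only [hf, if_pos rfl, if_neg h]
  rw [hA]
  have hB : ∑ C' : Fin N → S, ∏ n, f n (C' n) = ∏ n, ∑ j, f n j := by
    rw [Finset.prod_univ_sum]
    rw [Fintype.piFinset_univ]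
  rw [hB]
  have hC1 : ∑ j, f i0 j = K (M C) (C i0) c' := by
    simp only [hf, if_pos rfl]
    rw [Finset.sum_ite_eq' Finset.univ c' (fun j => K (M C) (C i0) j)]
    simp
  rw [Finset.prod_eq_single i0]
  · exact hC1
  · intro n _ hn
    simp only [hf, if_neg hn]
    exact (hK (M C)).2 (C n)
  · intro h; exact absurd (Finset.mem_univ i0) h
end

section
/- Let surjection H : S → T between finite state sets be a lumping for row-stochastic matrix P on S, i.e., whenever H(s₁)=H(s₂), then for all t' ∈ T, Σ_{s': H(s')=t'} P_{s₁,s'} = Σ_{s': H(s')=t'} P_{s₂,s'}, and let the labelling satisfy ℓ_S(s) = ℓ_T(H(s)). Then for every bounded PCTL formula Φ and state s ∈ S: s ⊨_S Φ iff H(s) ⊨_T Φ, where T carries the induced quotient matrix Q_{t,t'} = Σ_{s': H(s')=t'} P_{s,s'} for any s with H(s)=t. -/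
open scoped Classical
open Finset

/-- Syntax of bounded PCTL over atomic propositions `AP`. -/
inductive PCTL (AP : Type*) where
  | atom (a : AP)
  | neg (Φ : PCTL AP)
  | or (Φ₁ Φ₂ : PCTL AP)
  | probNext (rel : ℝ → ℝ → Prop) (p : ℝ) (Φ : PCTL AP)
  | probUntil (rel : ℝ → ℝ → Prop) (p : ℝ) (k : ℕ) (Φ₁ Φ₂ : PCTL AP)

/-- Bounded-until satisfaction probability with satisfaction sets `A`, `B`. -/
noncomputable def fU {S : Type*} [Fintype S] (P : S → S → ℝ) (A B : Set S) :
    ℕ → S → ℝ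
  | 0, s => if s ∈ B then 1 else 0
  | k + 1, s =>
      if s ∈ B then 1
      else if s ∈ A then ∑ s' : S, P s s' * fU P A B k s'
      else 0

/-- Satisfaction of bounded PCTL on a labelled DTMC `(P, ℓ)`; path
probabilities are the ones generated by the row-stochastic matrix `P`. -/
noncomputable def sat {S : Type*} [Fintype S] {AP : Type*}
    (P : S → S → ℝ) (ℓ : S → Set AP) : PCTL AP → S → Prop
  | .atom a, s => a ∈ ℓ s
  | .neg Φ, s => ¬ sat P ℓ Φ s
  | .or Φ₁ Φ₂, s => sat P ℓ Φ₁ s ∨ sat P ℓ Φ₂ s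
  | .probNext rel p Φ, s =>
      rel (∑ s' ∈ Finset.univ.filter (fun s' => sat P ℓ Φ s'), P s s') p
  | .probUntil rel p k Φ₁ Φ₂, s =>
      rel (fU P {s' | sat P ℓ Φ₁ s'} {s' | sat P ℓ Φ₂ s'} k s) p


lemma fiber_sum {S T : Type*} [Fintype S] [Fintype T]
    (P : S → S → ℝ) (H : S → T) (Q : T → T → ℝ)
    (hQ : ∀ (s : S) (t' : T),
      Q (H s) t' = ∑ s' ∈ Finset.univ.filter (fun s' => H s' = t'), P s s')
    (g : T → ℝ) (s : S) :
    ∑ s' : S, P s s' * g (H s') = ∑ t' : T, Q (H s) t' * g t' := by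
  classical
  rw [← Finset.sum_fiberwise Finset.univ H (fun s' => P s s' * g (H s'))]
  refine Finset.sum_congr rfl fun t' _ => ?_
  rw [hQ, Finset.sum_mul]
  refine Finset.sum_congr rfl fun s' hs' => ?_
  simp only [Finset.mem_filter] at hs'
  rw [hs'.2]

lemma fU_lump {S T : Type*} [Fintype S] [Fintype T]
    (P : S → S → ℝ) (H : S → T) (Q : T → T → ℝ)
    (hQ : ∀ (s : S) (t' : T),
      Q (H s) t' = ∑ s' ∈ Finset.univ.filter (fun s' => H s' = t'), P s s')
    (A B : Set T) : ∀ (k : ℕ) (s : S),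
    fU P (H ⁻¹' A) (H ⁻¹' B) k s = fU Q A B k (H s) := by
  intro k
  induction k with
  | zero => intro s; simp [fU, Set.mem_preimage]
  | succ k ih =>
    intro s
    simp only [fU, Set.mem_preimage]
    by_cases hB : H s ∈ B
    · simp [hB]
    · by_cases hA : H s ∈ A
      · simp only [hB, hA, if_true, if_false]
        rw [← fiber_sum P H Q hQ (fU Q A B k) s]
        exact Finset.sum_congr rfl fun s' _ => by rw [ih s']
      · simp [hB, hA]

/-- Lemma 1 of the paper: a lumping `H` compatible with the
labelling preserves satisfaction of every bounded PCTL formula. -/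
theorem stmt_10 {S T : Type*} [Fintype S] [Fintype T] {AP : Type*}
    (P : S → S → ℝ)
    (hPnonneg : ∀ i j, 0 ≤ P i j) (hProw : ∀ i, ∑ j, P i j = 1)
    (H : S → T) (hsurj : Function.Surjective H)
    (hlump : ∀ s₁ s₂, H s₁ = H s₂ → ∀ t' : T,
      ∑ s' ∈ Finset.univ.filter (fun s' => H s' = t'), P s₁ s' =
      ∑ s' ∈ Finset.univ.filter (fun s' => H s' = t'), P s₂ s')
    (Q : T → T → ℝ)
    (hQ : ∀ (s : S) (t' : T),
      Q (H s) t' = ∑ s' ∈ Finset.univ.filter (fun s' => H s' = t'), P s s')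
    (ℓS : S → Set AP) (ℓT : T → Set AP)
    (hlab : ∀ s, ℓS s = ℓT (H s)) :
    ∀ (Φ : PCTL AP) (s : S), sat P ℓS Φ s ↔ sat Q ℓT Φ (H s) := by
  intro Φ
  induction Φ with
  | atom a => intro s; simp [sat, hlab s]
  | neg Φ ih => intro s; simp [sat, ih s]
  | or Φ₁ Φ₂ ih₁ ih₂ => intro s; simp [sat, ih₁ s, ih₂ s]
  | probNext rel p Φ ih =>
    intro s
    simp only [sat]
    have : ∑ s' ∈ Finset.univ.filter (fun s' => sat P ℓS Φ s'), P s s' =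
        ∑ t' ∈ Finset.univ.filter (fun t' => sat Q ℓT Φ t'), Q (H s) t' := by
      rw [Finset.sum_filter, Finset.sum_filter]
      have := fiber_sum P H Q hQ (fun t' => if sat Q ℓT Φ t' then 1 else 0) s
      simp only [mul_ite, mul_one, mul_zero] at this
      rw [← this]
      exact Finset.sum_congr rfl fun s' _ => by rw [ih s']
    rw [this]
  | probUntil rel p k Φ₁ Φ₂ ih₁ ih₂ =>
    intro s
    simp only [sat]
    have h1 : {s' | sat P ℓS Φ₁ s'} = H ⁻¹' {t | sat Q ℓT Φ₁ t} := by
      ext s'; exact ih₁ s'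
    have h2 : {s' | sat P ℓS Φ₂ s'} = H ⁻¹' {t | sat Q ℓT Φ₂ t} := by
      ext s'; exact ih₂ s'
    rw [h1, h2, fU_lump P H Q hQ]
end

section
/- For the Next operator modulo lumping: if H : S → T is a lumping for P with quotient Q and sat ⊆ S satisfies s' ∈ sat ↔ H(s') ∈ satT for some satT ⊆ T, then for every s ∈ S, Σ_{s' ∈ sat} P_{s,s'} = Σ_{t' ∈ satT} Q_{H(s),t'}. Hence s ⊨ P_{⋈p}(X Φ) iff H(s) ⊨ P_{⋈p}(X Φ). -/
open scoped Classical
open Finset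

/-- the Next operator modulo lumping: one-step probabilities into
compatible satisfaction sets agree, hence satisfaction of `P_{⋈p}(X Φ)` is
preserved by the abstraction. -/
theorem stmt_12 {S T : Type*} [Fintype S] [Fintype T]
    (P : S → S → ℝ)
    (hPnonneg : ∀ i j, 0 ≤ P i j) (hProw : ∀ i, ∑ j, P i j = 1)
    (H : S → T) (hsurj : Function.Surjective H)
    (hlump : ∀ s₁ s₂, H s₁ = H s₂ → ∀ t' : T,
      ∑ s' ∈ Finset.univ.filter (fun s' => H s' = t'), P s₁ s' =
      ∑ s' ∈ Finset.univ.filter (fun s' => H s' = t'), P s₂ s')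
    (Q : T → T → ℝ)
    (hQ : ∀ (s : S) (t' : T),
      Q (H s) t' = ∑ s' ∈ Finset.univ.filter (fun s' => H s' = t'), P s s')
    (sat : Set S) (satT : Set T)
    (hsat : ∀ s', s' ∈ sat ↔ H s' ∈ satT)
    (rel : ℝ → ℝ → Prop) (p : ℝ) :
    ∀ s : S,
      (∑ s' ∈ Finset.univ.filter (fun s' => s' ∈ sat), P s s' =
        ∑ t' ∈ Finset.univ.filter (fun t' => t' ∈ satT), Q (H s) t') ∧
      (rel (∑ s' ∈ Finset.univ.filter (fun s' => s' ∈ sat), P s s') p ↔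
        rel (∑ t' ∈ Finset.univ.filter (fun t' => t' ∈ satT), Q (H s) t') p) := by
  intro s
  have key : ∑ s' ∈ Finset.univ.filter (fun s' => s' ∈ sat), P s s' =
      ∑ t' ∈ Finset.univ.filter (fun t' => t' ∈ satT), Q (H s) t' := by
    simp only [hQ]
    rw [Finset.sum_sigma']
    apply Finset.sum_nbij' (fun s' => ⟨H s', s'⟩) (fun x => x.2)
    · intro s' h
      simp only [Finset.mem_filter, Finset.mem_univ, true_and] at h
      simp only [Finset.mem_sigma, Finset.mem_filter, Finset.mem_univ, true_and]
      exact ⟨(hsat s').1 h, trivial⟩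
    · rintro ⟨t', s'⟩ h
      simp only [Finset.mem_sigma, Finset.mem_filter, Finset.mem_univ, true_and] at h
      simp only [Finset.mem_filter, Finset.mem_univ, true_and]
      exact (hsat s').2 (h.2 ▸ h.1)
    · intro s' h; rfl
    · rintro ⟨t', s'⟩ h
      simp only [Finset.mem_sigma, Finset.mem_filter, Finset.mem_univ, true_and] at h
      simp [h.2]
    · intro x h; rfl
  exact ⟨key, by rw [key]⟩
end
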